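/- For γ > 0, c > 0, d ≥ 1 and ξ ∈ ℝ^d, ξ ≠ 0, the function û_ν(ξ,t) = (2/(ct‖ξ‖^{ν/2}))^{γ+d/2-1} Γ(γ+d/2) J_{γ+d/2-1}(ct‖ξ‖^{ν/2}) satisfies the ODE in t: ∂²û/∂t² + ((d+2γ-1)/t) ∂û/∂t = -c²‖ξ‖^ν û, for any ν > 0. -/

import Mathlib

open Real

/-- The Bessel function of the first kind of (real) order `μ`. -/
noncomputable def besselJ (μ : ℝ) (x : ℝ) : ℝ :=
  ∑' k : ℕ, (-1 : ℝ) ^ k * (x / 2) ^ (2 * (k : ℝ) + μ) /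
    (Nat.factorial k * Real.Gamma ((k : ℝ) + μ + 1))

namespace EPDaux


/-- Coefficients of the normalized Bessel series. -/
noncomputable def b (μ : ℝ) (k : ℕ) : ℝ :=
  (-1) ^ k / ((k.factorial : ℝ) * Real.Gamma ((k : ℝ) + μ + 1) * 4 ^ k)

lemma gamma_pos {μ : ℝ} (hμ : -1 < μ) (k : ℕ) : 0 < Real.Gamma ((k : ℝ) + μ + 1) := by
  apply Real.Gamma_pos_of_pos
  have : (0:ℝ) ≤ (k:ℝ) := Nat.cast_nonneg k
  linarith

lemma denom_pos {μ : ℝ} (hμ : -1 < μ) (k : ℕ) :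
    0 < (k.factorial : ℝ) * Real.Gamma ((k : ℝ) + μ + 1) * 4 ^ k := by
  have h1 : (0:ℝ) < k.factorial := by exact_mod_cast k.factorial_pos
  have h2 := gamma_pos hμ k
  positivity

lemma abs_b {μ : ℝ} (hμ : -1 < μ) (k : ℕ) :
    |b μ k| = 1 / ((k.factorial : ℝ) * Real.Gamma ((k : ℝ) + μ + 1) * 4 ^ k) := by
  rw [b, abs_div, abs_pow, abs_neg, abs_one, one_pow, abs_of_pos (denom_pos hμ k)]

lemma b_succ {μ : ℝ} (hμ : -1 < μ) (k : ℕ) :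
    b μ (k + 1) * (4 * ((k:ℝ) + 1) * ((k:ℝ) + μ + 1)) = - b μ k := by
  have h1 : ((k:ℝ) + μ + 1) ≠ 0 := by
    have : (0:ℝ) ≤ (k:ℝ) := Nat.cast_nonneg k
    intro h; linarith [h.ge]
  have hΓ : Real.Gamma (((k+1:ℕ) : ℝ) + μ + 1)
      = ((k:ℝ) + μ + 1) * Real.Gamma ((k:ℝ) + μ + 1) := by
    push_cast
    rw [show (k:ℝ) + 1 + μ + 1 = ((k:ℝ) + μ + 1) + 1 by ring, Real.Gamma_add_one h1]
  have hf : ((k+1).factorial : ℝ) = ((k:ℝ) + 1) * (k.factorial : ℝ) := by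
    rw [Nat.factorial_succ]; push_cast; ring
  have hfa : ((k.factorial : ℝ)) ≠ 0 := by exact_mod_cast k.factorial_ne_zero
  have hΓ0 : Real.Gamma ((k:ℝ) + μ + 1) ≠ 0 := (gamma_pos hμ k).ne'
  have h4 : ((4:ℝ) ^ k) ≠ 0 := by positivity
  have hk1 : ((k:ℝ) + 1) ≠ 0 := by positivity
  rw [b, b, hΓ, hf]
  rw [pow_succ, pow_succ]
  field_simp



set_option maxHeartbeats 1000000 in
lemma summable_aux {μ : ℝ} (hμ : -1 < μ) (m : ℕ) {r : ℝ} (hr : 0 ≤ r) :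
    Summable (fun k : ℕ => ((k:ℝ) + 1) ^ m * r ^ k /
      ((k.factorial : ℝ) * Real.Gamma ((k : ℝ) + μ + 1) * 4 ^ k)) := by
  have hΓpos : ∀ k : ℕ, 0 < Real.Gamma ((k : ℝ) + μ + 1) := by
    intro k
    apply Real.Gamma_pos_of_pos
    have : (0:ℝ) ≤ (k:ℝ) := Nat.cast_nonneg k
    linarith
  set N := ⌈(1:ℝ) - μ⌉₊ with hNdef
  rw [← summable_nat_add_iff N]
  have hbig : Summable (fun k : ℕ => ((2:ℝ) ^ m * r) ^ (k + N) / ((k + N).factorial : ℝ)) :=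
    (summable_nat_add_iff N).2 (Real.summable_pow_div_factorial _)
  apply Summable.of_nonneg_of_le _ _ hbig
  · intro k
    have := hΓpos (k + N)
    positivity
  · intro k
    set n := k + N with hn
    have hΓ1 : (1:ℝ) ≤ Real.Gamma ((n : ℝ) + μ + 1) := by
      have h2 : (2:ℝ) ≤ (n : ℝ) + μ + 1 := by
        have hN : (1:ℝ) - μ ≤ N := Nat.le_ceil _
        have hn' : (N:ℝ) ≤ (n:ℝ) := by exact_mod_cast Nat.le_add_left N k
        linarith
      calc (1:ℝ) = Real.Gamma 2 := Real.Gamma_two.symm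
        _ ≤ Real.Gamma ((n:ℝ) + μ + 1) :=
          Real.Gamma_strictMonoOn_Ici.monotoneOn (by norm_num) h2 h2
    have hpow : ((n:ℝ) + 1) ^ m ≤ ((2:ℝ) ^ m) ^ n := by
      have h1 : ((n:ℝ) + 1) ≤ (2:ℝ) ^ n := by
        have := Nat.lt_two_pow_self (n := n)
        exact_mod_cast this
      calc ((n:ℝ) + 1) ^ m ≤ ((2:ℝ) ^ n) ^ m :=
            pow_le_pow_left₀ (by positivity) h1 m
        _ = ((2:ℝ) ^ m) ^ n := by rw [← pow_mul, ← pow_mul, Nat.mul_comm]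
    have hfpos : (0:ℝ) < (n.factorial : ℝ) := by exact_mod_cast n.factorial_pos
    have hdenom : (n.factorial : ℝ) ≤ (n.factorial : ℝ) * Real.Gamma ((n:ℝ) + μ + 1) * 4 ^ n := by
      have h4 : (1:ℝ) ≤ 4 ^ n := one_le_pow₀ (by norm_num)
      calc (n.factorial : ℝ) = (n.factorial : ℝ) * 1 * 1 := by ring
        _ ≤ (n.factorial : ℝ) * Real.Gamma ((n:ℝ) + μ + 1) * 4 ^ n :=
          mul_le_mul (mul_le_mul le_rfl hΓ1 zero_le_one hfpos.le) h4 zero_le_one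
            (by positivity)
    calc ((n:ℝ) + 1) ^ m * r ^ n / ((n.factorial : ℝ) * Real.Gamma ((n : ℝ) + μ + 1) * 4 ^ n)
        ≤ ((2:ℝ) ^ m) ^ n * r ^ n / (n.factorial : ℝ) := by
          apply div_le_div₀ (by positivity) _ hfpos hdenom
          exact mul_le_mul_of_nonneg_right hpow (by positivity)
      _ = ((2:ℝ) ^ m * r) ^ n / (n.factorial : ℝ) := by rw [mul_pow]






noncomputable def g (μ : ℝ) (x : ℝ) : ℝ := ∑' k : ℕ, b μ k * x ^ (2 * k)

noncomputable def g1 (μ : ℝ) (x : ℝ) : ℝ :=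
  ∑' k : ℕ, (b μ k * (2 * (k:ℝ))) * x ^ (2 * k - 1)

noncomputable def g2 (μ : ℝ) (x : ℝ) : ℝ :=
  ∑' k : ℕ, (b μ k * (2 * (k:ℝ))) * (((2 * k - 1 : ℕ) : ℝ) * x ^ (2 * k - 1 - 1))

lemma bound0 {μ : ℝ} (hμ : -1 < μ) {R : ℝ} (hR : 1 ≤ R) {y : ℝ} (hy : |y| ≤ R) (k : ℕ) :
    |b μ k * y ^ (2 * k)| ≤
      ((k:ℝ) + 1) ^ 0 * (R ^ 2) ^ k /
        ((k.factorial : ℝ) * Real.Gamma ((k : ℝ) + μ + 1) * 4 ^ k) := by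
  have hd := denom_pos hμ k
  have h1 : |y| ^ (2 * k) ≤ R ^ (2 * k) :=
    pow_le_pow_left₀ (abs_nonneg y) hy _
  calc |b μ k * y ^ (2 * k)| = |y| ^ (2 * k) /
        ((k.factorial : ℝ) * Real.Gamma ((k : ℝ) + μ + 1) * 4 ^ k) := by
        rw [abs_mul, abs_b hμ, abs_pow]; ring
    _ ≤ R ^ (2 * k) /
        ((k.factorial : ℝ) * Real.Gamma ((k : ℝ) + μ + 1) * 4 ^ k) := by gcongr
    _ = ((k:ℝ) + 1) ^ 0 * (R ^ 2) ^ k /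
        ((k.factorial : ℝ) * Real.Gamma ((k : ℝ) + μ + 1) * 4 ^ k) := by
        rw [pow_zero, one_mul, ← pow_mul]

lemma bound1 {μ : ℝ} (hμ : -1 < μ) {R : ℝ} (hR : 1 ≤ R) {y : ℝ} (hy : |y| ≤ R) (k : ℕ) :
    |(b μ k * (2 * (k:ℝ))) * y ^ (2 * k - 1)| ≤
      2 * (((k:ℝ) + 1) ^ 1 * (R ^ 2) ^ k /
        ((k.factorial : ℝ) * Real.Gamma ((k : ℝ) + μ + 1) * 4 ^ k)) := by
  have hd := denom_pos hμ k
  have hR0 : (0:ℝ) ≤ R := le_trans zero_le_one hR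
  have h1 : |y| ^ (2 * k - 1) ≤ R ^ (2 * k) := by
    calc |y| ^ (2 * k - 1) ≤ R ^ (2 * k - 1) := pow_le_pow_left₀ (abs_nonneg y) hy _
      _ ≤ R ^ (2 * k) := pow_le_pow_right₀ hR (by omega)
  have key : (2 * (k:ℝ)) * |y| ^ (2 * k - 1) ≤ 2 * (((k:ℝ) + 1) * R ^ (2 * k)) := by
    have h2 : (2 * (k:ℝ)) ≤ 2 * ((k:ℝ) + 1) := by
      have : (0:ℝ) ≤ (k:ℝ) := Nat.cast_nonneg k
      linarith
    calc (2 * (k:ℝ)) * |y| ^ (2 * k - 1) ≤ (2 * ((k:ℝ) + 1)) * R ^ (2 * k) :=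
        mul_le_mul h2 h1 (by positivity) (by positivity)
      _ = 2 * (((k:ℝ) + 1) * R ^ (2 * k)) := by ring
  calc |(b μ k * (2 * (k:ℝ))) * y ^ (2 * k - 1)|
      = (2 * (k:ℝ)) * |y| ^ (2 * k - 1) /
        ((k.factorial : ℝ) * Real.Gamma ((k : ℝ) + μ + 1) * 4 ^ k) := by
        rw [abs_mul, abs_mul, abs_b hμ, abs_pow,
          abs_of_nonneg (show (0:ℝ) ≤ 2 * (k:ℝ) by positivity)]
        ring
    _ ≤ 2 * (((k:ℝ) + 1) * R ^ (2 * k)) /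
        ((k.factorial : ℝ) * Real.Gamma ((k : ℝ) + μ + 1) * 4 ^ k) := by gcongr
    _ = 2 * (((k:ℝ) + 1) ^ 1 * (R ^ 2) ^ k /
        ((k.factorial : ℝ) * Real.Gamma ((k : ℝ) + μ + 1) * 4 ^ k)) := by
        rw [pow_one, ← pow_mul]; ring

lemma bound2 {μ : ℝ} (hμ : -1 < μ) {R : ℝ} (hR : 1 ≤ R) {y : ℝ} (hy : |y| ≤ R) (k : ℕ) :
    |(b μ k * (2 * (k:ℝ))) * (((2 * k - 1 : ℕ) : ℝ) * y ^ (2 * k - 1 - 1))| ≤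
      4 * (((k:ℝ) + 1) ^ 2 * (R ^ 2) ^ k /
        ((k.factorial : ℝ) * Real.Gamma ((k : ℝ) + μ + 1) * 4 ^ k)) := by
  have hd := denom_pos hμ k
  have hR0 : (0:ℝ) ≤ R := le_trans zero_le_one hR
  have h1 : |y| ^ (2 * k - 1 - 1) ≤ R ^ (2 * k) := by
    calc |y| ^ (2 * k - 1 - 1) ≤ R ^ (2 * k - 1 - 1) := pow_le_pow_left₀ (abs_nonneg y) hy _
      _ ≤ R ^ (2 * k) := pow_le_pow_right₀ hR (by omega)
  have h2 : (2 * (k:ℝ)) ≤ 2 * ((k:ℝ) + 1) := by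
    have : (0:ℝ) ≤ (k:ℝ) := Nat.cast_nonneg k
    linarith
  have h3 : ((2 * k - 1 : ℕ) : ℝ) ≤ 2 * ((k:ℝ) + 1) := by
    have : ((2 * k - 1 : ℕ) : ℝ) ≤ ((2 * k : ℕ) : ℝ) := by
      exact_mod_cast Nat.sub_le _ _
    push_cast at this ⊢
    linarith
  have key : (2 * (k:ℝ)) * (((2 * k - 1 : ℕ) : ℝ) * |y| ^ (2 * k - 1 - 1)) ≤
      4 * (((k:ℝ) + 1) ^ 2 * R ^ (2 * k)) := by
    have hm : ((2 * k - 1 : ℕ) : ℝ) * |y| ^ (2 * k - 1 - 1) ≤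
        (2 * ((k:ℝ) + 1)) * R ^ (2 * k) :=
      mul_le_mul h3 h1 (by positivity) (by positivity)
    calc (2 * (k:ℝ)) * (((2 * k - 1 : ℕ) : ℝ) * |y| ^ (2 * k - 1 - 1)) ≤
        (2 * ((k:ℝ) + 1)) * ((2 * ((k:ℝ) + 1)) * R ^ (2 * k)) :=
        mul_le_mul h2 hm (by positivity) (by positivity)
      _ = 4 * (((k:ℝ) + 1) ^ 2 * R ^ (2 * k)) := by ring
  calc |(b μ k * (2 * (k:ℝ))) * (((2 * k - 1 : ℕ) : ℝ) * y ^ (2 * k - 1 - 1))|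
      = (2 * (k:ℝ)) * (((2 * k - 1 : ℕ) : ℝ) * |y| ^ (2 * k - 1 - 1)) /
        ((k.factorial : ℝ) * Real.Gamma ((k : ℝ) + μ + 1) * 4 ^ k) := by
        simp only [abs_mul, abs_pow, abs_b hμ, Nat.abs_cast, abs_two]
        ring
    _ ≤ 4 * (((k:ℝ) + 1) ^ 2 * R ^ (2 * k)) /
        ((k.factorial : ℝ) * Real.Gamma ((k : ℝ) + μ + 1) * 4 ^ k) := by gcongr
    _ = 4 * (((k:ℝ) + 1) ^ 2 * (R ^ 2) ^ k /
        ((k.factorial : ℝ) * Real.Gamma ((k : ℝ) + μ + 1) * 4 ^ k)) := by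
        rw [← pow_mul]; ring









lemma summable_g {μ : ℝ} (hμ : -1 < μ) (x : ℝ) :
    Summable (fun k : ℕ => b μ k * x ^ (2 * k)) := by
  have hR : (1:ℝ) ≤ |x| + 1 := by linarith [abs_nonneg x]
  have hy : |x| ≤ |x| + 1 := by linarith
  refine Summable.of_abs ?_
  exact (summable_aux hμ 0 (sq_nonneg (|x| + 1))).of_nonneg_of_le
    (fun k => abs_nonneg _) (fun k => bound0 hμ hR hy k)

lemma summable_g1 {μ : ℝ} (hμ : -1 < μ) (x : ℝ) :
    Summable (fun k : ℕ => (b μ k * (2 * (k:ℝ))) * x ^ (2 * k - 1)) := by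
  have hR : (1:ℝ) ≤ |x| + 1 := by linarith [abs_nonneg x]
  have hy : |x| ≤ |x| + 1 := by linarith
  refine Summable.of_abs ?_
  exact ((summable_aux hμ 1 (sq_nonneg (|x| + 1))).mul_left 2).of_nonneg_of_le
    (fun k => abs_nonneg _) (fun k => bound1 hμ hR hy k)

lemma summable_g2 {μ : ℝ} (hμ : -1 < μ) (x : ℝ) :
    Summable (fun k : ℕ =>
      (b μ k * (2 * (k:ℝ))) * (((2 * k - 1 : ℕ) : ℝ) * x ^ (2 * k - 1 - 1))) := by
  have hR : (1:ℝ) ≤ |x| + 1 := by linarith [abs_nonneg x]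
  have hy : |x| ≤ |x| + 1 := by linarith
  refine Summable.of_abs ?_
  exact ((summable_aux hμ 2 (sq_nonneg (|x| + 1))).mul_left 4).of_nonneg_of_le
    (fun k => abs_nonneg _) (fun k => bound2 hμ hR hy k)

lemma hasDerivAt_g {μ : ℝ} (hμ : -1 < μ) (x : ℝ) :
    HasDerivAt (g μ) (g1 μ x) x := by
  set R : ℝ := |x| + 1 with hRdef
  have hR : (1:ℝ) ≤ R := by rw [hRdef]; linarith [abs_nonneg x]
  have hR0 : (0:ℝ) < R := by positivity
  rw [show g μ = fun y => ∑' k : ℕ, b μ k * y ^ (2 * k) from rfl, g1]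
  apply hasDerivAt_tsum_of_isPreconnected
    ((summable_aux hμ 1 (sq_nonneg R)).mul_left 2)
    (Metric.isOpen_ball) ((convex_ball (0:ℝ) R).isPreconnected)
    (g := fun k y => b μ k * y ^ (2 * k))
    (g' := fun k y => (b μ k * (2 * (k:ℝ))) * y ^ (2 * k - 1))
    (y₀ := (0:ℝ))
  · intro k y hy
    have h := (hasDerivAt_pow (2 * k) y).const_mul (b μ k)
    exact h.congr_deriv (by push_cast; ring)
  · intro k y hy
    rw [Metric.mem_ball, Real.dist_eq, sub_zero] at hy
    simpa only [Real.norm_eq_abs, pow_one] using bound1 hμ hR hy.le k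
  · exact Metric.mem_ball_self hR0
  · apply summable_of_ne_finset_zero (s := {0})
    intro k hk
    simp only [Finset.mem_singleton] at hk
    have : 2 * k ≠ 0 := by omega
    simp [zero_pow this]
  · rw [Metric.mem_ball, Real.dist_eq, sub_zero, hRdef]
    linarith [abs_nonneg x]

lemma hasDerivAt_g1 {μ : ℝ} (hμ : -1 < μ) (x : ℝ) :
    HasDerivAt (g1 μ) (g2 μ x) x := by
  set R : ℝ := |x| + 1 with hRdef
  have hR : (1:ℝ) ≤ R := by rw [hRdef]; linarith [abs_nonneg x]
  have hR0 : (0:ℝ) < R := by linarith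
  rw [show g1 μ = fun y => ∑' k : ℕ, (b μ k * (2 * (k:ℝ))) * y ^ (2 * k - 1) from rfl, g2]
  apply hasDerivAt_tsum_of_isPreconnected
    ((summable_aux hμ 2 (sq_nonneg R)).mul_left 4)
    (Metric.isOpen_ball) ((convex_ball (0:ℝ) R).isPreconnected)
    (g := fun k y => (b μ k * (2 * (k:ℝ))) * y ^ (2 * k - 1))
    (g' := fun k y => (b μ k * (2 * (k:ℝ))) * (((2 * k - 1 : ℕ) : ℝ) * y ^ (2 * k - 1 - 1)))
    (y₀ := (0:ℝ))
  · intro k y hy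
    exact (hasDerivAt_pow (2 * k - 1) y).const_mul (b μ k * (2 * (k:ℝ)))
  · intro k y hy
    rw [Metric.mem_ball, Real.dist_eq, sub_zero] at hy
    simpa only [Real.norm_eq_abs] using bound2 hμ hR hy.le k
  · exact Metric.mem_ball_self hR0
  · apply summable_of_ne_finset_zero (s := {0})
    intro k hk
    simp only [Finset.mem_singleton] at hk
    have : 2 * k - 1 ≠ 0 := by omega
    simp [zero_pow this]
  · rw [Metric.mem_ball, Real.dist_eq, sub_zero, hRdef]
    linarith [abs_nonneg x]

lemma ode {μ : ℝ} (hμ : -1 < μ) (x : ℝ) :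
    x * g2 μ x + (2 * μ + 1) * g1 μ x + x * g μ x = 0 := by
  have S0 := summable_g hμ x
  have S1 := summable_g1 hμ x
  have S2 := summable_g2 hμ x
  rw [g, g1, g2, ← tsum_mul_left, ← tsum_mul_left, ← tsum_mul_left]
  rw [← Summable.tsum_add (S2.mul_left x) (S1.mul_left (2 * μ + 1))]
  set p : ℕ → ℝ := fun k =>
    x * ((b μ k * (2 * (k:ℝ))) * (((2 * k - 1 : ℕ) : ℝ) * x ^ (2 * k - 1 - 1))) +
    (2 * μ + 1) * ((b μ k * (2 * (k:ℝ))) * x ^ (2 * k - 1)) with hp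
  set q : ℕ → ℝ := fun k => x * (b μ k * x ^ (2 * k)) with hq
  have Sp : Summable p := (S2.mul_left x).add (S1.mul_left (2 * μ + 1))
  have Sq : Summable q := S0.mul_left x
  have hps : ∀ k : ℕ, p (k + 1) = - q k := by
    intro k
    have e1 : 2 * (k + 1) - 1 = 2 * k + 1 := by omega
    have e2 : 2 * (k + 1) - 1 - 1 = 2 * k := by omega
    have hb := b_succ hμ k
    simp only [hp, hq, e1, e2]
    push_cast
    linear_combination (x ^ (2 * k) * x) * hb
  have hp0 : p 0 = 0 := by simp [hp]
  rw [Summable.tsum_eq_zero_add Sp, hp0, zero_add]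
  have : ∑' k : ℕ, p (k + 1) = - ∑' k : ℕ, q k := by
    rw [← tsum_neg]
    exact tsum_congr fun k => by rw [hps k]
  rw [this]
  ring








lemma besselJ_eq (μ : ℝ) {y : ℝ} (hy : 0 < y) :
    besselJ μ y = (y / 2) ^ μ * g μ y := by
  rw [besselJ, g, ← tsum_mul_left]
  apply tsum_congr
  intro k
  have h2 : (0:ℝ) < y / 2 := by linarith
  have hcast : 2 * (k:ℝ) + μ = ((2 * k : ℕ) : ℝ) + μ := by push_cast; ring
  rw [hcast, Real.rpow_add h2, Real.rpow_natCast]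
  have h4 : (y / 2) ^ (2 * k) = y ^ (2 * k) / 4 ^ k := by
    rw [div_pow, pow_mul (2:ℝ)]
    norm_num
  rw [h4, b]
  field_simp


end EPDaux


open EPDaux in
theorem fractional_epd_fourier_ode (d : ℕ) (hd : 1 ≤ d) (γ c ν : ℝ)
    (hγ : 0 < γ) (hc : 0 < c) (hν : 0 < ν)
    (ξ : EuclideanSpace ℝ (Fin d)) (hξ : ξ ≠ 0)
    (u : ℝ → ℝ)
    (hu : ∀ s : ℝ, u s =
      (2 / (c * s * ‖ξ‖ ^ (ν / 2))) ^ (γ + (d : ℝ) / 2 - 1) *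
        Real.Gamma (γ + d / 2) *
        besselJ (γ + (d : ℝ) / 2 - 1) (c * s * ‖ξ‖ ^ (ν / 2)))
    (t : ℝ) (ht : 0 < t) :
    deriv (deriv u) t + ((d + 2 * γ - 1) / t) * deriv u t =
      -(c ^ 2) * ‖ξ‖ ^ ν * u t := by
  have hd1 : (1:ℝ) ≤ (d:ℝ) := by exact_mod_cast hd
  set μ : ℝ := γ + (d : ℝ) / 2 - 1 with hμdef
  have hμ : -1 < μ := by rw [hμdef]; linarith
  have hx : (0:ℝ) < ‖ξ‖ := norm_pos_iff.2 hξ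
  set a : ℝ := c * ‖ξ‖ ^ (ν / 2) with hadef
  have ha : 0 < a := mul_pos hc (Real.rpow_pos_of_pos hx _)
  set C : ℝ := Real.Gamma (γ + d / 2) with hCdef
  -- key pointwise formula
  have key : ∀ s : ℝ, 0 < s → u s = C * g μ (a * s) := by
    intro s hs
    have hy : 0 < a * s := mul_pos ha hs
    have harg : c * s * ‖ξ‖ ^ (ν / 2) = a * s := by rw [hadef]; ring
    rw [hu s, harg, besselJ_eq μ hy]
    have hinv : (2 / (a * s)) ^ μ * ((a * s) / 2) ^ μ = 1 := by
      rw [← Real.mul_rpow (by positivity) (by positivity)]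
      rw [show 2 / (a * s) * (a * s / 2) = 1 by field_simp]
      exact Real.one_rpow μ
    calc (2 / (a * s)) ^ μ * C * (((a * s) / 2) ^ μ * g μ (a * s))
        = ((2 / (a * s)) ^ μ * ((a * s) / 2) ^ μ) * (C * g μ (a * s)) := by ring
      _ = C * g μ (a * s) := by rw [hinv, one_mul]
  -- derivative of u on (0, ∞)
  have hder : ∀ s : ℝ, 0 < s → HasDerivAt u ((C * a) * g1 μ (a * s)) s := by
    intro s hs
    have h1 : HasDerivAt (fun s' : ℝ => a * s') a s := by
      simpa using (hasDerivAt_id s).const_mul a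
    have h2 : HasDerivAt (fun s' : ℝ => C * g μ (a * s')) ((C * a) * g1 μ (a * s)) s := by
      have := ((hasDerivAt_g hμ (a * s)).comp s h1).const_mul C
      exact this.congr_deriv (by ring)
    apply h2.congr_of_eventuallyEq
    filter_upwards [eventually_gt_nhds hs] with s' hs'
    exact key s' hs'
  have hder1 : ∀ s : ℝ, 0 < s → deriv u s = (C * a) * g1 μ (a * s) :=
    fun s hs => (hder s hs).deriv
  have hder2 : HasDerivAt (deriv u) ((C * a * a) * g2 μ (a * t)) t := by
    have h1 : HasDerivAt (fun s' : ℝ => a * s') a t := by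
      simpa using (hasDerivAt_id t).const_mul a
    have h2 : HasDerivAt (fun s' : ℝ => (C * a) * g1 μ (a * s'))
        ((C * a * a) * g2 μ (a * t)) t := by
      have := ((hasDerivAt_g1 hμ (a * t)).comp t h1).const_mul (C * a)
      exact this.congr_deriv (by ring)
    apply h2.congr_of_eventuallyEq
    filter_upwards [eventually_gt_nhds ht] with s' hs'
    exact hder1 s' hs'
  rw [hder2.deriv, hder1 t ht, key t ht]
  have hode := ode hμ (a * t)
  have ha2 : a ^ 2 = c ^ 2 * ‖ξ‖ ^ ν := by
    rw [hadef, mul_pow, ← Real.rpow_natCast (‖ξ‖ ^ (ν / 2)) 2, ← Real.rpow_mul hx.le]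
    norm_num
  have hμ2 : 2 * μ + 1 = (d:ℝ) + 2 * γ - 1 := by rw [hμdef]; ring
  have ht' : t ≠ 0 := ht.ne'
  field_simp
  rw [← hμ2]
  linear_combination (C * a) * hode - (C * g μ (a * t) * t) * ha2
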